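/- Let 𝒮 = (S_1, …, S_K) be a finite collection of nonempty finite strings over an alphabet Σ with total length N ≥ 3. Then the number of edges of the DAWG of 𝒮, i.e., the number of pairs (C, a) where C is an endpos-equivalence class of nonempty substrings of 𝒮 and a ∈ Σ is a character such that w·a is a substring of 𝒮 for some (equivalently, every) w ∈ C, is at most 3N − 4. (Equivalently, by the duality between DAWG edges and Weiner links, the total number of hard and soft Weiner links of the suffix tree of the reversed collection is at most 3N − 4.) -/

import Mathlib

/-- `EndPos S w` is the set of ending positions of the nonempty string `w` in the
collection `S = (S 0, …, S (K-1))`: pairs `(i, j)` with `|w| ≤ j ≤ |S i|` (positions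
being 1-based) such that `w` equals the length-`|w|` substring of `S i` ending at
position `j`. -/
def EndPos {α : Type*} {K : ℕ} (S : Fin K → List α) (w : List α) :
    Set (Fin K × ℕ) :=
  {p | w.length ≤ p.2 ∧ p.2 ≤ (S p.1).length ∧
    w = ((S p.1).take p.2).drop (p.2 - w.length)}

section Basics
variable {α : Type*} {K : ℕ} (S : Fin K → List α)

/-- `Occ S i j w`: `w` occurs in `S i` ending at (1-based) position `j`. -/
def Occ (i : Fin K) (j : ℕ) (w : List α) : Prop :=
  w.length ≤ j ∧ j ≤ (S i).length ∧
    ∀ k, (hk : k < w.length) → (hk2 : j - w.length + k < (S i).length) →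
      w[k] = (S i)[j - w.length + k]

theorem mem_endPos_iff {i : Fin K} {j : ℕ} {w : List α} :
    (i, j) ∈ EndPos S w ↔ Occ S i j w := by
  unfold EndPos Occ
  simp only [Set.mem_setOf_eq]
  constructor
  · rintro ⟨h1, h2, h3⟩
    refine ⟨h1, h2, fun k hk hk2 => ?_⟩
    rw [List.getElem_of_eq h3, List.getElem_drop, List.getElem_take]
  · rintro ⟨h1, h2, h3⟩
    refine ⟨h1, h2, ?_⟩
    apply List.ext_getElem
    · simp; omega
    · intro n hn1 hn2
      rw [List.getElem_drop, List.getElem_take]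
      exact h3 n hn1 (by omega)

theorem gec {l : List α} {m n : ℕ} (h : m = n) {hm : m < l.length} :
    l[m]'hm = l[n]'(h ▸ hm) := by subst h; rfl

/-- `SubS S w`: `w` is a nonempty substring of the collection. -/
def SubS (w : List α) : Prop := w ≠ [] ∧ ∃ i, w <:+: S i

/-- Left-maximal strings: the longest representatives of endpos classes. -/
def LM (w : List α) : Prop := SubS S w ∧ ∀ c, EndPos S (c :: w) ≠ EndPos S w

variable {S}

theorem occ_of_infix {i : Fin K} {w : List α} (h : w <:+: S i) :
    ∃ j, Occ S i j w := by
  obtain ⟨s, t, hst⟩ := h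
  refine ⟨s.length + w.length, ?_, ?_, ?_⟩
  · omega
  · rw [← hst]; simp
  · intro k hk hk2
    have hidx : s.length + w.length - w.length + k = s.length + k := by omega
    rw [gec hidx, List.getElem_of_eq hst.symm,
      List.getElem_append_left (by simp; omega),
      List.getElem_append_right (by omega)]
    exact gec (by omega)

theorem infix_of_occ {i : Fin K} {j : ℕ} {w : List α} (h : (i, j) ∈ EndPos S w) :
    w <:+: S i := by
  obtain ⟨h1, h2, h3⟩ := h
  rw [h3]
  exact ((List.drop_suffix _ _).isInfix).trans (List.take_prefix _ _).isInfix

theorem endPos_nonempty {w : List α} (hw : ∃ i, w <:+: S i) :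
    ∃ p, p ∈ EndPos S w := by
  obtain ⟨i, hi⟩ := hw
  obtain ⟨j, hj⟩ := occ_of_infix hi
  exact ⟨(i, j), (mem_endPos_iff S).mpr hj⟩

theorem sub_of_mem_endPos {w : List α} (hw : w ≠ []) {p} (hp : p ∈ EndPos S w) :
    SubS S w := ⟨hw, ⟨p.1, infix_of_occ (by exact hp)⟩⟩

/-- Suffixes have larger endpos sets. -/
theorem endPos_anti {u v : List α} (h : u <:+ v) : EndPos S v ⊆ EndPos S u := by
  rintro ⟨i, j⟩ hv
  obtain ⟨z, hz⟩ := h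
  subst hz
  rw [mem_endPos_iff] at hv ⊢
  obtain ⟨h1, h2, h3⟩ := hv
  have hlen : (z ++ u).length = z.length + u.length := by simp
  refine ⟨by omega, h2, fun k hk hk2 => ?_⟩
  have hvk : u[k] = (z ++ u)[z.length + k]'(by omega) := by
    rw [List.getElem_append_right (by omega)]
    exact gec (by omega)
  rw [hvk, h3 (z.length + k) (by omega) (by omega)]
  exact gec (by omega)

theorem suffix_of_occ_occ {w1 w2 : List α} {i : Fin K} {j : ℕ}
    (h1 : (i, j) ∈ EndPos S w1) (h2 : (i, j) ∈ EndPos S w2)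
    (hle : w1.length ≤ w2.length) : w1 <:+ w2 := by
  rw [mem_endPos_iff] at h1 h2
  obtain ⟨h1a, h1b, h1c⟩ := h1
  obtain ⟨h2a, h2b, h2c⟩ := h2
  have : w1 = w2.drop (w2.length - w1.length) := by
    apply List.ext_getElem
    · simp; omega
    · intro n hn1 hn2
      rw [List.getElem_drop]
      rw [h1c n hn1 (by omega), h2c (w2.length - w1.length + n) (by omega) (by omega)]
      congr 1; omega
  rw [this]; exact List.drop_suffix _ _

/-- Extend an occurrence one step to the right. -/
theorem occ_concat {w : List α} {i : Fin K} {j : ℕ}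
    (h : (i, j) ∈ EndPos S w) (hj : j < (S i).length) :
    (i, j + 1) ∈ EndPos S (w ++ [(S i)[j]]) := by
  rw [mem_endPos_iff] at h ⊢
  obtain ⟨h1, h2, h3⟩ := h
  refine ⟨by simp; omega, by omega, fun k hk hk2 => ?_⟩
  simp only [List.length_append, List.length_cons, List.length_nil] at hk ⊢
  rcases lt_or_ge k w.length with hk' | hk'
  · rw [List.getElem_append_left hk', h3 k hk' (by omega)]
    congr 1; omega
  · have hkw : k = w.length := by omega
    subst hkw
    rw [List.getElem_append_right (le_refl _)]
    simp
    congr 1; omega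

/-- From an occurrence of `w ++ [a]`, get the occurrence of `w` one step left. -/
theorem occ_of_occ_concat {w : List α} {a : α} {i : Fin K} {j : ℕ}
    (h : (i, j) ∈ EndPos S (w ++ [a])) :
    (i, j - 1) ∈ EndPos S w ∧ ∀ (hj : j - 1 < (S i).length), (S i)[j - 1] = a := by
  rw [mem_endPos_iff] at h
  obtain ⟨h1, h2, h3⟩ := h
  simp only [List.length_append, List.length_cons, List.length_nil] at h1 h3
  constructor
  · rw [mem_endPos_iff]
    refine ⟨by omega, by omega, fun k hk hk2 => ?_⟩
    have := h3 k (by omega) (by omega)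
    rw [List.getElem_append_left hk] at this
    rw [this]; congr 1; omega
  · intro hj
    have := h3 w.length (by omega) (by omega)
    rw [List.getElem_append_right (le_refl _)] at this
    simp at this
    rw [gec (show j - 1 = j - (w.length + 1) + w.length by omega)]
    exact this.symm

end Basics

section More
variable {α : Type*} {K : ℕ} {S : Fin K → List α}

theorem sub_concat_of_endPos_eq {u w : List α} {a : α}
    (h : EndPos S u = EndPos S w) (hw : SubS S (w ++ [a])) : SubS S (u ++ [a]) := by
  obtain ⟨-, hinf⟩ := hw
  obtain ⟨⟨i, j⟩, hp⟩ := endPos_nonempty hinf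
  obtain ⟨hocc, hchar⟩ := occ_of_occ_concat hp
  have hj : w.length + 1 ≤ j ∧ j ≤ (S i).length := by
    have := (mem_endPos_iff S).mp hp
    obtain ⟨a1, a2, -⟩ := this
    simp at a1; omega
  have hj1 : j - 1 < (S i).length := by omega
  have hu : (i, j - 1) ∈ EndPos S u := by rw [h]; exact hocc
  have := occ_concat hu hj1
  rw [hchar hj1] at this
  have hj2 : j - 1 + 1 = j := by omega
  rw [hj2] at this
  exact ⟨by simp, i, infix_of_occ this⟩

theorem subS_of_prefix {x u : List α} (hu : SubS S u) (hx : x <+: u) (hne : x ≠ []) :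
    SubS S x := by
  obtain ⟨-, i, hi⟩ := hu
  exact ⟨hne, i, hx.isInfix.trans hi⟩

/-- Prefixes of left-maximal strings are left-maximal. -/
theorem lm_prefix {x u : List α} (hu : LM S u) (hx : x <+: u) (hne : x ≠ []) :
    LM S x := by
  refine ⟨subS_of_prefix hu.1 hx hne, fun c hc => ?_⟩
  obtain ⟨y, hy⟩ := hx
  apply hu.2 c
  apply Set.Subset.antisymm (endPos_anti (List.suffix_cons c u))
  rintro ⟨i, j⟩ hj
  have hjo := (mem_endPos_iff S).mp hj
  obtain ⟨h1, h2, h3⟩ := hjo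
  have hlen : x.length + y.length = u.length := by rw [← hy]; simp
  -- x occurs ending at j' = j - u.length + x.length
  have hx' : (i, j - u.length + x.length) ∈ EndPos S x := by
    rw [mem_endPos_iff]
    refine ⟨by omega, by omega, fun k hk hk2 => ?_⟩
    have : x[k] = u[k]'(by omega) :=
      ((List.getElem_of_eq hy.symm (by omega)).trans (List.getElem_append_left hk)).symm
    rw [this, h3 k (by omega) (by omega)]
    exact gec (by omega)
  rw [← hc] at hx'
  have hx'o := (mem_endPos_iff S).mp hx'
  obtain ⟨g1, g2, g3⟩ := hx'o
  simp only [List.length_cons] at g1 g3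
  have hchar := g3 0 (by omega) (by omega)
  simp only [List.getElem_cons_zero] at hchar
  -- now show (i, j) ∈ EndPos (c :: u)
  rw [mem_endPos_iff]
  refine ⟨by simp; omega, h2, fun k hk hk2 => ?_⟩
  simp only [List.length_cons] at hk hk2 ⊢
  rcases Nat.eq_zero_or_pos k with rfl | hkpos
  · simp only [List.getElem_cons_zero]
    rw [hchar]
    exact gec (by omega)
  · rw [List.getElem_cons, dif_neg (by omega), h3 (k - 1) (by omega) (by omega)]
    exact gec (by omega)

theorem subS_length_le {N : ℕ} (hN : N = ∑ i, (S i).length) {w : List α}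
    (hw : SubS S w) : w.length ≤ N := by
  obtain ⟨-, i, hi⟩ := hw
  calc w.length ≤ (S i).length := hi.length_le
    _ ≤ ∑ i, (S i).length := Finset.single_le_sum (f := fun i => (S i).length)
        (fun _ _ => Nat.zero_le _) (Finset.mem_univ i)
    _ = N := hN.symm

/-- Every nonempty substring has a left-maximal representative of its class. -/
theorem exists_rep {N : ℕ} (hN : N = ∑ i, (S i).length) {w : List α}
    (hw : SubS S w) : ∃ u, LM S u ∧ EndPos S u = EndPos S w ∧ w <:+ u := by
  have main : ∀ m (w : List α), SubS S w → N ≤ w.length + m →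
      ∃ u, LM S u ∧ EndPos S u = EndPos S w ∧ w <:+ u := by
    intro m
    induction m with
    | zero =>
      intro w hw hlen
      refine ⟨w, ⟨hw, fun c hc => ?_⟩, rfl, List.suffix_refl w⟩
      have hne : ∃ p, p ∈ EndPos S (c :: w) := by
        rw [hc]; exact endPos_nonempty hw.2
      obtain ⟨p, hp⟩ := hne
      have : SubS S (c :: w) := sub_of_mem_endPos (by simp) hp
      have := subS_length_le hN this
      simp at this; omega
    | succ m IH =>
      intro w hw hlen
      by_cases hLM : LM S w
      · exact ⟨w, hLM, rfl, List.suffix_refl w⟩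
      · have : ∃ c, EndPos S (c :: w) = EndPos S w := by
          unfold LM at hLM
          push_neg at hLM
          exact hLM hw
        obtain ⟨c, hc⟩ := this
        have hsub : SubS S (c :: w) := by
          obtain ⟨p, hp⟩ : ∃ p, p ∈ EndPos S (c :: w) := by
            rw [hc]; exact endPos_nonempty hw.2
          exact sub_of_mem_endPos (by simp) hp
        obtain ⟨u, hu1, hu2, hu3⟩ := IH (c :: w) hsub (by simp; omega)
        exact ⟨u, hu1, by rw [hu2, hc], (List.suffix_cons c w).trans hu3⟩
  exact main (N - w.length) w hw (by omega)

/-- Left-maximal strings are determined by their endpos sets. -/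
theorem lm_inj {u1 u2 : List α} (h1 : LM S u1) (h2 : LM S u2)
    (h : EndPos S u1 = EndPos S u2) : u1 = u2 := by
  have aux : ∀ v1 v2 : List α, LM S v1 → LM S v2 → EndPos S v1 = EndPos S v2 →
      v1.length ≤ v2.length → v1 = v2 := by
    intro v1 v2 g1 g2 g hle
    obtain ⟨⟨i, j⟩, hp⟩ := endPos_nonempty (S := S) g1.1.2
    have hp2 : (i, j) ∈ EndPos S v2 := g ▸ hp
    have hsuf : v1 <:+ v2 := suffix_of_occ_occ hp hp2 hle
    rcases eq_or_lt_of_le hle with heq | hlt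
    · exact hsuf.eq_of_length heq
    · obtain ⟨z, hz⟩ := hsuf
      have hzne : z ≠ [] := by
        intro hze; rw [hze] at hz; simp at hz; rw [hz] at hlt; omega
      obtain ⟨z', c, hz'⟩ : ∃ z' c, z = z' ++ [c] := by
        refine ⟨z.dropLast, z.getLast hzne, ?_⟩
        rw [List.dropLast_append_getLast hzne]
      exfalso
      apply g1.2 c
      have hsuf2 : (c :: v1) <:+ v2 := ⟨z', by rw [← hz, hz']; simp⟩
      apply Set.Subset.antisymm (endPos_anti (List.suffix_cons c v1))
      intro p hp'
      have : p ∈ EndPos S v2 := by rw [← g]; exact hp'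
      exact endPos_anti hsuf2 this
  rcases le_total u1.length u2.length with hle | hle
  · exact aux u1 u2 h1 h2 h hle
  · exact (aux u2 u1 h2 h1 h.symm hle).symm

end More

section More2
variable {α : Type*} {K : ℕ} {S : Fin K → List α}

theorem subS_finite {N : ℕ} (hN : N = ∑ i, (S i).length) :
    {w : List α | SubS S w}.Finite := by
  apply Set.Finite.subset (Set.finite_range
    (fun p : Fin K × Fin (N + 1) × Fin (N + 1) => ((S p.1).take p.2.1).drop p.2.2))
  rintro w ⟨hne, i, s, t, hst⟩
  have hlen : s.length + w.length ≤ (S i).length := by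
    rw [← hst]; simp only [List.length_append]; omega
  have hN' : (S i).length ≤ N := by
    rw [hN]
    exact Finset.single_le_sum (f := fun i => (S i).length)
      (fun _ _ => Nat.zero_le _) (Finset.mem_univ i)
  refine ⟨⟨i, ⟨s.length + w.length, by omega⟩, ⟨s.length, by omega⟩⟩, ?_⟩
  simp only
  rw [← hst]
  rw [show s ++ w ++ t = (s ++ w) ++ t by simp, List.take_append_of_le_length (by simp),
    List.take_of_length_le (by simp), List.drop_append_of_le_length (by simp)]
  simp

/-- Two strings occurring at the same starting position: shorter is a prefix. -/
theorem prefix_of_same_start {v1 v2 : List α} {i : Fin K} {j1 j2 : ℕ}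
    (h1 : (i, j1) ∈ EndPos S v1) (h2 : (i, j2) ∈ EndPos S v2)
    (hstart : j1 - v1.length = j2 - v2.length) (hle : v1.length ≤ v2.length) :
    v1 <+: v2 := by
  rw [mem_endPos_iff] at h1 h2
  obtain ⟨a1, a2, a3⟩ := h1
  obtain ⟨b1, b2, b3⟩ := h2
  have : v1 = v2.take v1.length := by
    apply List.ext_getElem
    · simp; omega
    · intro n hn1 hn2
      rw [List.getElem_take, a3 n hn1 (by omega), b3 n (by omega) (by omega)]
      exact gec (by omega)
  rw [this]; exact List.take_prefix _ _

/-- The first letter of a (nonempty) string of the collection is left-maximal. -/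
theorem exists_singleton_lm (i : Fin K) (hi : S i ≠ []) :
    ∃ c, LM S [c] := by
  obtain ⟨c, t, hct⟩ := List.exists_cons_of_ne_nil hi
  refine ⟨c, ?_⟩
  have hocc : (i, 1) ∈ EndPos S [c] := by
    rw [mem_endPos_iff]
    refine ⟨by simp, by rw [hct]; simp, fun k hk hk2 => ?_⟩
    simp only [List.length_cons, List.length_nil] at hk
    have hk0 : k = 0 := by omega
    subst hk0
    simp only [List.getElem_cons_zero]
    have : (S i)[1 - [c].length + 0]'hk2 = (S i)[0]'(by omega) := gec (by simp)
    rw [this, List.getElem_of_eq hct]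
    rfl
  refine ⟨⟨by simp, i, infix_of_occ hocc⟩, fun b hb => ?_⟩
  have : (i, 1) ∈ EndPos S (b :: [c]) := by rw [hb]; exact hocc
  have := ((mem_endPos_iff S).mp this).1
  simp at this

end More2

theorem exists_maximal_old {γ : Type*} [PartialOrder γ] (s : Finset γ) (h : s.Nonempty) :
    ∃ m ∈ s, ∀ x ∈ s, ¬ m < x := by
  obtain ⟨m, hm, hmx⟩ := Finset.exists_maximal h
  exact ⟨m, hm, fun x hx hlt => lt_irrefl _ (lt_of_lt_of_le hlt (hmx hx hlt.le))⟩

open Finset in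
theorem laminar_bound {β : Type*} [DecidableEq β] (G : Finset (Finset β))
    (h1 : ∀ A ∈ G, A.Nonempty)
    (h2 : ∀ A ∈ G, ∀ B ∈ G, A ⊆ B ∨ B ⊆ A ∨ Disjoint A B) :
    G.card + (G.filter fun A => ∀ B ∈ G, A ⊆ B → A = B).card ≤ 2 * (G.sup id).card := by
  classical
  induction G using Finset.strongInduction with
  | _ G IH =>
  rcases G.eq_empty_or_nonempty with rfl | hG
  · simp
  set Mx := G.filter fun A => ∀ B ∈ G, A ⊆ B → A = B with hMx
  -- every element of G is below some maximal element
  have hbelow : ∀ B ∈ G, ∃ A ∈ Mx, B ⊆ A := by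
    intro B hB
    have hne : (G.filter fun A => B ⊆ A).Nonempty := ⟨B, by simp [hB]⟩
    obtain ⟨A, hA, hmax⟩ := exists_maximal_old _ hne
    simp only [Finset.mem_filter] at hA
    refine ⟨A, ?_, hA.2⟩
    simp only [hMx, Finset.mem_filter]
    refine ⟨hA.1, fun C hC hAC => ?_⟩
    by_contra hne2
    exact hmax C (by simp [hC, hA.2.trans hAC]) (lt_of_le_of_ne hAC hne2)
  -- maximal elements are pairwise disjoint
  have hdisj : ∀ A ∈ Mx, ∀ B ∈ Mx, A ≠ B → Disjoint A B := by
    intro A hA B hB hAB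
    simp only [hMx, Finset.mem_filter] at hA hB
    rcases h2 A hA.1 B hB.1 with h | h | h
    · exact absurd (hA.2 B hB.1 h) hAB
    · exact absurd (hB.2 A hA.1 h).symm hAB
    · exact h
  have hMxG : Mx ⊆ G := Finset.filter_subset _ _
  -- the families G_A partition G
  have hpart : G = Mx.biUnion (fun A => G.filter fun B => B ⊆ A) := by
    apply Finset.ext; intro B
    simp only [Finset.mem_biUnion, Finset.mem_filter]
    constructor
    · intro hB
      obtain ⟨A, hA, hBA⟩ := hbelow B hB
      exact ⟨A, hA, hB, hBA⟩
    · rintro ⟨A, hA, hB, -⟩; exact hB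
  have hdisjfam : ∀ A ∈ Mx, ∀ B ∈ Mx, A ≠ B →
      Disjoint (G.filter fun C => C ⊆ A) (G.filter fun C => C ⊆ B) := by
    intro A hA B hB hAB
    rw [Finset.disjoint_left]
    intro C hCA hCB
    simp only [Finset.mem_filter] at hCA hCB
    have := (hdisj A hA B hB hAB).mono hCA.2 hCB.2
    exact (h1 C hCA.1).ne_empty (disjoint_self.mp this)
  -- per-class bound
  have hkey : ∀ A ∈ Mx, (G.filter fun B => B ⊆ A).card + 1 ≤ 2 * A.card := by
    intro A hA
    have hAG : A ∈ G := hMxG hA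
    set GA := G.filter fun B => B ⊆ A with hGA
    have hAinGA : A ∈ GA := by simp [hGA, hAG]
    set H := GA.erase A with hH
    have hHG : H ⊂ G := by
      refine Finset.ssubset_iff_of_subset ((Finset.erase_subset _ _).trans (Finset.filter_subset _ _)) |>.mpr ?_
      exact ⟨A, hAG, fun h => (Finset.notMem_erase _ _) h⟩
    have hHsub : ∀ B ∈ H, B ⊆ A := by
      intro B hB
      have := Finset.mem_of_mem_erase hB
      simp only [hGA, Finset.mem_filter] at this; exact this.2
    have hHG' : H ⊆ G := fun B hB => (Finset.filter_subset _ _) (Finset.mem_of_mem_erase hB)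
    have IHH := IH H hHG (fun B hB => h1 B (hHG' hB))
      (fun B hB C hC => h2 B (hHG' hB) C (hHG' hC))
    have hcardGA : GA.card = H.card + 1 := by
      rw [hH, Finset.card_erase_of_mem hAinGA]
      have : 1 ≤ GA.card := Finset.card_pos.mpr ⟨A, hAinGA⟩
      omega
    have hsupA : H.sup id ⊆ A := Finset.sup_le fun B hB => hHsub B hB
    have hAne : 1 ≤ A.card := Finset.card_pos.mpr (h1 A hAG)
    rcases H.eq_empty_or_nonempty with hHe | hHne
    · have : H.card = 0 := by simp [hHe]
      omega
    · set MH := H.filter fun B => ∀ C ∈ H, B ⊆ C → B = C with hMH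
      have hMHne : MH.Nonempty := by
        obtain ⟨B, hB, hmax⟩ := exists_maximal_old H hHne
        refine ⟨B, ?_⟩
        simp only [hMH, Finset.mem_filter]
        exact ⟨hB, fun C hC hBC => by
          by_contra hne2; exact hmax C hC (lt_of_le_of_ne hBC hne2)⟩
      rcases lt_or_ge 1 MH.card with hm2 | hm1
      · -- at least two maximal in H
        have : H.card + 2 ≤ 2 * (H.sup id).card := by omega
        have hsc : (H.sup id).card ≤ A.card := Finset.card_le_card hsupA
        omega
      · -- exactly one maximal B in H
        obtain ⟨B, hB⟩ := hMHne
        have hMHeq : MH = {B} := by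
          apply Finset.eq_singleton_iff_unique_mem.mpr
          exact ⟨hB, fun C hC => by
            have := Finset.card_le_one.mp hm1 C hC B hB; exact this⟩
        -- every element of H is ⊆ B
        have hallB : ∀ C ∈ H, C ⊆ B := by
          intro C hC
          have hne : (H.filter fun D => C ⊆ D).Nonempty := ⟨C, by simp [hC]⟩
          obtain ⟨D, hD, hmax⟩ := exists_maximal_old _ hne
          simp only [Finset.mem_filter] at hD
          have hDMH : D ∈ MH := by
            simp only [hMH, Finset.mem_filter]
            refine ⟨hD.1, fun E hE hDE => ?_⟩
            by_contra hne2
            exact hmax E (by simp [hE, hD.2.trans hDE]) (lt_of_le_of_ne hDE hne2)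
          rw [hMHeq, Finset.mem_singleton] at hDMH
          exact hDMH ▸ hD.2
        have hBmem : B ∈ H := (Finset.mem_filter.mp (hMHeq ▸ Finset.mem_singleton_self B : B ∈ MH)).1
        have hsupB : H.sup id ⊆ B := Finset.sup_le hallB
        have hBA : B ⊂ A := by
          refine Finset.ssubset_iff_of_subset (hHsub B hBmem) |>.mpr ?_
          have : B ≠ A := Finset.ne_of_mem_erase hBmem
          by_contra h
          push_neg at h
          exact this (Finset.Subset.antisymm (hHsub B hBmem) (fun x hx => by
        by_contra hxB
        exact absurd (h x hx) hxB))
        have hcard : (H.sup id).card ≤ A.card - 1 := by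
          have h1' := Finset.card_le_card hsupB
          have h2' := Finset.card_lt_card hBA
          omega
        have : 1 ≤ MH.card := Finset.card_pos.mpr ⟨B, hB⟩
        omega
  -- sum up
  have hcardG : G.card = ∑ A ∈ Mx, (G.filter fun B => B ⊆ A).card := by
    conv_lhs => rw [hpart]
    exact Finset.card_biUnion hdisjfam
  have hsum : ∑ A ∈ Mx, A.card ≤ (G.sup id).card := by
    rw [← Finset.card_biUnion (fun A hA B hB hAB => hdisj A hA B hB hAB)]
    apply Finset.card_le_card
    intro x hx
    simp only [Finset.mem_biUnion] at hx
    obtain ⟨A, hA, hxA⟩ := hx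
    exact Finset.mem_sup.mpr ⟨A, hMxG hA, hxA⟩
  calc G.card + Mx.card = ∑ A ∈ Mx, ((G.filter fun B => B ⊆ A).card + 1) := by
        rw [hcardG, Finset.sum_add_distrib, Finset.sum_const, smul_eq_mul, mul_one]
    _ ≤ ∑ A ∈ Mx, 2 * A.card := Finset.sum_le_sum hkey
    _ = 2 * ∑ A ∈ Mx, A.card := by rw [Finset.mul_sum]
    _ ≤ 2 * (G.sup id).card := by omega

theorem concat_inj' {α : Type*} {u v : List α} {a b : α}
    (h : u ++ [a] = v ++ [b]) : u = v ∧ a = b := by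
  have hlen : u.length = v.length := by
    have := congrArg List.length h
    simp at this; omega
  obtain ⟨h1, h2⟩ := List.append_inj h hlen
  simp at h2
  exact ⟨h1, h2⟩

theorem mem_endPos_iff' {α : Type*} {K : ℕ} {S : Fin K → List α} {p : Fin K × ℕ}
    {w : List α} : p ∈ EndPos S w ↔ Occ S p.1 p.2 w := by
  obtain ⟨i, j⟩ := p; exact mem_endPos_iff S


/-- The DAWG of a collection of nonempty strings of total length `N ≥ 3` has at most
`3N - 4` edges: the number of pairs `(C, a)`, where `C = EndPos w` is an
endpos-equivalence class of a nonempty substring `w` and `a` is a character such that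
`w·a` is again a substring of the collection, is at most `3N - 4`. -/
theorem card_dawg_edges_le {α : Type*} (K : ℕ) (S : Fin K → List α)
    (hS : ∀ i, S i ≠ []) (N : ℕ) (hN : N = ∑ i, (S i).length) (hN3 : 3 ≤ N) :
    {q : Set (Fin K × ℕ) × α |
        ∃ w : List α, w ≠ [] ∧ (∃ i, w <:+: S i) ∧ q.1 = EndPos S w ∧
          ∃ i, (w ++ [q.2]) <:+: S i}.ncard
      ≤ 3 * N - 4 := by
  classical
  have hK : K ≠ 0 := by
    rintro rfl
    rw [hN] at hN3; simp at hN3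
  obtain ⟨c₀, hc₀⟩ := exists_singleton_lm (S := S) ⟨0, Nat.pos_of_ne_zero hK⟩
      (hS _)
  have hMfin : {w : List α | LM S w}.Finite :=
    (subS_finite hN).subset (fun w hw => hw.1)
  set E : Set (Set (Fin K × ℕ) × α) := {q : Set (Fin K × ℕ) × α |
        ∃ w : List α, w ≠ [] ∧ (∃ i, w <:+: S i) ∧ q.1 = EndPos S w ∧
          ∃ i, (w ++ [q.2]) <:+: S i} with hE
  set E' : Set (List α × α) := {q | LM S q.1 ∧ SubS S (q.1 ++ [q.2])} with hE'
  have hE'fin : E'.Finite := by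
    apply Set.Finite.of_finite_image (f := fun q : List α × α => q.1 ++ [q.2])
    · apply (subS_finite hN).subset
      rintro v ⟨q, hq, rfl⟩
      exact hq.2
    · rintro q1 hq1 q2 hq2 h
      obtain ⟨h1, h2⟩ := concat_inj' h
      exact Prod.ext h1 h2
  -- Step 1 : inject `E` into `E'`
  have hkey : ∀ q : Set (Fin K × ℕ) × α, ∃ u : List α,
      q ∈ E → (LM S u ∧ q.1 = EndPos S u ∧ SubS S (u ++ [q.2])) := by
    intro q
    by_cases hq : q ∈ E
    · obtain ⟨w, hw1, hw2, hw3, hw4⟩ := hq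
      obtain ⟨u, hu1, hu2, hu3⟩ := exists_rep hN ⟨hw1, hw2⟩
      refine ⟨u, fun _ => ⟨hu1, by rw [hw3, hu2], ?_⟩⟩
      exact sub_concat_of_endPos_eq hu2 ⟨by simp, hw4⟩
    · exact ⟨[], fun h => absurd h hq⟩
  choose rep hrep using hkey
  have step1 : E.ncard ≤ E'.ncard := by
    refine Set.ncard_le_ncard_of_injOn (fun q => (rep q, q.2)) ?_ ?_ hE'fin
    · intro q hq
      obtain ⟨h1, h2, h3⟩ := hrep q hq
      exact ⟨h1, h3⟩
    · intro q1 hq1 q2 hq2 h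
      simp only [Prod.mk.injEq] at h
      obtain ⟨ha, hb⟩ := h
      obtain ⟨-, e1, -⟩ := hrep q1 hq1
      obtain ⟨-, e2, -⟩ := hrep q2 hq2
      refine Prod.ext ?_ hb
      rw [e1, e2, ha]
  -- Step 2 : split into primary and secondary edges
  set P : Set (List α × α) := {q ∈ E' | LM S (q.1 ++ [q.2])} with hP
  set Q : Set (List α × α) := {q ∈ E' | ¬ LM S (q.1 ++ [q.2])} with hQ
  have step2 : E'.ncard ≤ P.ncard + Q.ncard := by
    have : E' = P ∪ Q := by
      ext q
      simp only [hP, hQ, Set.mem_union, Set.mem_setOf_eq]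
      tauto
    rw [this]
    exact Set.ncard_union_le _ _
  -- Step 3 : primary edges are at most |M| - 1
  have hc₀M : [c₀] ∈ {w : List α | LM S w} := hc₀
  have step3 : P.ncard ≤ {w : List α | LM S w}.ncard - 1 := by
    have h3a : P.ncard ≤ ({w : List α | LM S w} \ {[c₀]}).ncard := by
      refine Set.ncard_le_ncard_of_injOn (fun q => q.1 ++ [q.2]) ?_ ?_ hMfin.diff
      · rintro q ⟨hq1, hq2⟩
        refine ⟨hq2, fun hmem => ?_⟩
        have hmem' : q.1 ++ [q.2] = [c₀] := hmem
        have hl := congrArg List.length hmem'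
        simp only [List.length_append, List.length_cons, List.length_nil] at hl
        exact hq1.1.1.1 (List.eq_nil_of_length_eq_zero (by omega))
      · rintro q1 - q2 - h
        obtain ⟨h1, h2⟩ := concat_inj' h
        exact Prod.ext h1 h2
    rw [Set.ncard_diff_singleton_of_mem hc₀M] at h3a
    exact h3a
  -- Step 4 : laminar bound, |M| + 1 ≤ 2N
  set Pos : Finset (Fin K × ℕ) :=
    Finset.univ.biUnion (fun i => {i} ×ˢ Finset.Icc 1 (S i).length) with hPos
  have hPosmem : ∀ {i : Fin K} {j : ℕ}, 1 ≤ j → j ≤ (S i).length → (i, j) ∈ Pos := by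
    intro i j h1 h2
    simp only [hPos, Finset.mem_biUnion, Finset.mem_product, Finset.mem_singleton,
      Finset.mem_Icc, Finset.mem_univ]
    exact ⟨i, trivial, rfl, h1, h2⟩
  have hdisjProd : ∀ (g : Fin K → ℕ), ∀ i ∈ Finset.univ, ∀ i' ∈ Finset.univ, i ≠ i' →
      Disjoint (({i} : Finset (Fin K)) ×ˢ Finset.Icc 1 (g i))
        (({i'} : Finset (Fin K)) ×ˢ Finset.Icc 1 (g i')) := by
    rintro g i - i' - hii'
    rw [Finset.disjoint_left]
    rintro ⟨a, b⟩ hab hab'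
    simp only [Finset.mem_product, Finset.mem_singleton] at hab hab'
    exact hii' (hab.1 ▸ hab'.1 ▸ rfl)
  have hPoscard : Pos.card = N := by
    rw [hPos, Finset.card_biUnion (hdisjProd (fun i => (S i).length))]
    rw [hN]
    refine Finset.sum_congr rfl (fun i _ => ?_)
    rw [Finset.card_product, Finset.card_singleton, Nat.card_Icc]
    omega
  set MF : Finset (List α) := hMfin.toFinset with hMF
  set EF : List α → Finset (Fin K × ℕ) :=
    fun w => Pos.filter (fun p => p ∈ EndPos S w) with hEF
  have hEFmem : ∀ {w : List α}, LM S w → ∀ {p}, (p ∈ EF w ↔ p ∈ EndPos S w) := by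
    intro w hw p
    simp only [hEF, Finset.mem_filter, and_iff_right_iff_imp]
    intro hp
    obtain ⟨i, j⟩ := p
    obtain ⟨h1, h2, -⟩ := (mem_endPos_iff S).mp hp
    have hwne : w.length ≠ 0 := fun h => hw.1.1 (List.eq_nil_of_length_eq_zero h)
    exact hPosmem (by omega) h2
  have hEFsub : ∀ {w1 w2 : List α}, LM S w1 → LM S w2 →
      EndPos S w1 ⊆ EndPos S w2 → EF w1 ⊆ EF w2 := by
    intro w1 w2 h1 h2 hsub p hp
    exact (hEFmem h2).mpr (hsub ((hEFmem h1).mp hp))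
  set F : Finset (Finset (Fin K × ℕ)) := MF.image EF with hF
  have hMFmem : ∀ {w : List α}, w ∈ MF ↔ LM S w := fun {w} => hMfin.mem_toFinset
  have hFcard : F.card = MF.card := by
    apply Finset.card_image_of_injOn
    intro w1 hw1 w2 hw2 h
    have l1 : LM S w1 := hMFmem.mp hw1
    have l2 : LM S w2 := hMFmem.mp hw2
    apply lm_inj l1 l2
    ext p
    rw [← hEFmem l1, ← hEFmem l2, h]
  have hlam := laminar_bound F ?_ ?_
  · -- main line, using the laminar bound
    have hsupPos : F.sup id ≤ Pos := by
      apply Finset.sup_le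
      intro A hA
      obtain ⟨w, -, rfl⟩ := Finset.mem_image.mp hA
      exact Finset.filter_subset _ _
    have hFne : F.Nonempty :=
      ⟨EF [c₀], Finset.mem_image.mpr ⟨[c₀], hMFmem.mpr hc₀, rfl⟩⟩
    have hmax1 : 1 ≤ (F.filter fun A => ∀ B ∈ F, A ⊆ B → A = B).card := by
      obtain ⟨m, hm, hmax⟩ := exists_maximal_old F hFne
      apply Finset.card_pos.mpr
      refine ⟨m, Finset.mem_filter.mpr ⟨hm, fun B hB hmB => ?_⟩⟩
      by_contra hne
      exact hmax B hB (lt_of_le_of_ne hmB hne)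
    have hsupcard : (F.sup id).card ≤ N := hPoscard ▸ Finset.card_le_card hsupPos
    have hMcard : {w : List α | LM S w}.ncard = MF.card :=
      Set.ncard_eq_toFinset_card _ hMfin
    have step4 : {w : List α | LM S w}.ncard + 1 ≤ 2 * N := by omega
    -- Step 5 : secondary edges
    set Tfin : Finset (Fin K × ℕ) :=
      Finset.univ.biUnion (fun i => {i} ×ˢ Finset.Icc 1 ((S i).length - 2)) with hT
    have hQkey : ∀ q : List α × α, ∃ p : Fin K × ℕ, q ∈ Q →
        (p ∈ EndPos S (q.1 ++ [q.2]) ∧ q.1.length + 2 ≤ p.2) := by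
      intro q
      by_cases hq : q ∈ Q
      · obtain ⟨⟨hlm, hsub⟩, hnlm⟩ := hq
        have hcex : ∃ c, EndPos S (c :: (q.1 ++ [q.2])) = EndPos S (q.1 ++ [q.2]) := by
          unfold LM at hnlm
          push_neg at hnlm
          exact hnlm hsub
        obtain ⟨c, hc⟩ := hcex
        obtain ⟨p, hp⟩ := endPos_nonempty (S := S) hsub.2
        have hp' : p ∈ EndPos S (c :: (q.1 ++ [q.2])) := by rw [hc]; exact hp
        have h1 := (mem_endPos_iff'.mp hp').1
        simp only [List.length_cons, List.length_append, List.length_nil] at h1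
        exact ⟨p, fun _ => ⟨hp, by omega⟩⟩
      · exact ⟨(⟨0, Nat.pos_of_ne_zero hK⟩, 0), fun h => absurd h hq⟩
    choose pos hpos using hQkey
    have step5 : Q.ncard ≤ Tfin.card := by
      rw [← Set.ncard_coe_finset]
      refine Set.ncard_le_ncard_of_injOn
        (fun q => ((pos q).1, (pos q).2 - (q.1.length + 1))) ?_ ?_ Tfin.finite_toSet
      · intro q hq
        obtain ⟨hp, hlen⟩ := hpos q hq
        obtain ⟨h1, h2, -⟩ := mem_endPos_iff'.mp hp
        simp only [List.length_append, List.length_cons, List.length_nil] at h1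
        have hl0 : 0 < q.1.length := List.length_pos_iff.mpr hq.1.1.1.1
        simp only [Finset.mem_coe, hT, Finset.mem_biUnion, Finset.mem_product,
          Finset.mem_singleton, Finset.mem_Icc, Finset.mem_univ]
        exact ⟨(pos q).1, trivial, rfl, by omega, by omega⟩
      · intro q1 hq1 q2 hq2 h
        simp only [Prod.mk.injEq] at h
        obtain ⟨hi, hs⟩ := h
        obtain ⟨hp1, hl1⟩ := hpos q1 hq1
        obtain ⟨hp2, hl2⟩ := hpos q2 hq2
        have hb1 := mem_endPos_iff'.mp hp1
        have hb2 := mem_endPos_iff'.mp hp2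
        have hp1' : ((pos q2).1, (pos q1).2) ∈ EndPos S (q1.1 ++ [q1.2]) := by
          rw [← hi]
          exact (Prod.mk.eta (p := pos q1)) ▸ hp1
        have hp2'' : ((pos q2).1, (pos q2).2) ∈ EndPos S (q2.1 ++ [q2.2]) :=
          (Prod.mk.eta (p := pos q2)) ▸ hp2
        have hlen1 : (q1.1 ++ [q1.2]).length = q1.1.length + 1 := by simp
        have hlen2 : (q2.1 ++ [q2.2]).length = q2.1.length + 1 := by simp
        have hstart : (pos q1).2 - (q1.1 ++ [q1.2]).length
            = (pos q2).2 - (q2.1 ++ [q2.2]).length := by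
          rw [hlen1, hlen2]
          omega
        have haux : ∀ (qa qb : List α × α), qa ∈ Q → qb ∈ Q →
            ∀ (ja jb : ℕ) (i : Fin K), (i, ja) ∈ EndPos S (qa.1 ++ [qa.2]) →
            (i, jb) ∈ EndPos S (qb.1 ++ [qb.2]) →
            ja - (qa.1 ++ [qa.2]).length = jb - (qb.1 ++ [qb.2]).length →
            (qa.1 ++ [qa.2]).length < (qb.1 ++ [qb.2]).length → False := by
          intro qa qb hqa hqb ja jb i ha hb hst hlt
          have hpre : (qa.1 ++ [qa.2]) <+: (qb.1 ++ [qb.2]) :=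
            prefix_of_same_start ha hb hst (le_of_lt hlt)
          have hl : (qa.1 ++ [qa.2]).length ≤ qb.1.length := by
            simp only [List.length_append, List.length_cons, List.length_nil] at hlt ⊢
            omega
          have htake : qa.1 ++ [qa.2]
              = (qb.1 ++ [qb.2]).take (qa.1 ++ [qa.2]).length :=
            List.prefix_iff_eq_take.mp hpre
          have hpre2 : (qa.1 ++ [qa.2]) <+: qb.1 := by
            rw [List.take_append_of_le_length hl] at htake
            rw [htake]
            exact List.take_prefix _ _
          exact hqa.2 (lm_prefix hqb.1.1 hpre2 (by simp))
        have hvlen : (q1.1 ++ [q1.2]).length = (q2.1 ++ [q2.2]).length := by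
          by_contra hne
          rcases lt_or_gt_of_ne hne with hlt | hlt
          · exact haux q1 q2 hq1 hq2 _ _ _ hp1' hp2'' hstart hlt
          · have hp2' : ((pos q2).1, (pos q2).2) ∈ EndPos S (q2.1 ++ [q2.2]) := hp2''
            exact haux q2 q1 hq2 hq1 _ _ _ hp2' hp1' hstart.symm hlt
        have hveq : q1.1 ++ [q1.2] = q2.1 ++ [q2.2] :=
          (prefix_of_same_start hp1' hp2'' hstart (le_of_eq hvlen)).eq_of_length hvlen
        obtain ⟨ha, hb⟩ := concat_inj' hveq
        exact Prod.ext ha hb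
    have hTcard : Tfin.card = ∑ i, ((S i).length - 2) := by
      rw [hT, Finset.card_biUnion (hdisjProd (fun i => (S i).length - 2))]
      refine Finset.sum_congr rfl (fun i _ => ?_)
      rw [Finset.card_product, Finset.card_singleton, Nat.card_Icc]
      omega
    have hsum2 : (∑ i, ((S i).length - 2)) + 2 ≤ N := by
      by_cases hall : ∀ i, (S i).length ≤ 1
      · have : (∑ i, ((S i).length - 2)) = 0 :=
          Finset.sum_eq_zero (fun i _ => by have := hall i; omega)
        omega
      · push_neg at hall
        obtain ⟨i₁, hi₁⟩ := hall
        have e1 : ((S i₁).length - 2) + ∑ i ∈ Finset.univ.erase i₁, ((S i).length - 2)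
            = ∑ i, ((S i).length - 2) :=
          Finset.add_sum_erase _ (fun i => (S i).length - 2) (Finset.mem_univ i₁)
        have e2 : (S i₁).length + ∑ i ∈ Finset.univ.erase i₁, (S i).length
            = ∑ i, (S i).length :=
          Finset.add_sum_erase _ (fun i => (S i).length) (Finset.mem_univ i₁)
        have e3 : ∑ i ∈ Finset.univ.erase i₁, ((S i).length - 2)
            ≤ ∑ i ∈ Finset.univ.erase i₁, (S i).length :=
          Finset.sum_le_sum (fun i _ => by omega)
        omega
    -- Conclusion
    have hfinal := le_trans step1 step2
    have hM1 : 0 < {w : List α | LM S w}.ncard :=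
      (Set.ncard_pos hMfin).mpr ⟨[c₀], hc₀⟩
    omega
  · -- laminar : members nonempty
    intro A hA
    obtain ⟨w, hw, rfl⟩ := Finset.mem_image.mp hA
    have hlm : LM S w := hMFmem.mp hw
    obtain ⟨p, hp⟩ := endPos_nonempty (S := S) hlm.1.2
    exact ⟨p, (hEFmem hlm).mpr hp⟩
  · -- laminar : chain or disjoint
    intro A hA B hB
    obtain ⟨w1, hw1, rfl⟩ := Finset.mem_image.mp hA
    obtain ⟨w2, hw2, rfl⟩ := Finset.mem_image.mp hB
    have l1 : LM S w1 := hMFmem.mp hw1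
    have l2 : LM S w2 := hMFmem.mp hw2
    by_cases hdis : Disjoint (EF w1) (EF w2)
    · exact Or.inr (Or.inr hdis)
    · rw [Finset.not_disjoint_iff] at hdis
      obtain ⟨p, hpA, hpB⟩ := hdis
      have hp1 : p ∈ EndPos S w1 := (hEFmem l1).mp hpA
      have hp2 : p ∈ EndPos S w2 := (hEFmem l2).mp hpB
      obtain ⟨i, j⟩ := p
      rcases le_total w1.length w2.length with hle | hle
      · exact Or.inr (Or.inl (hEFsub l2 l1 (endPos_anti (suffix_of_occ_occ hp1 hp2 hle))))
      · exact Or.inl (hEFsub l1 l2 (endPos_anti (suffix_of_occ_occ hp2 hp1 hle)))
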